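/- Let Δ ≥ 3 and p₀ ∈ (0,1) with p₀(Δ−1) < 1, and let T^{(2)} be the total progeny of a Galton–Watson forest with two initial particles and offspring distribution Bin(Δ−1, p₀). Set ξ_* = log( (Δ−2)^{Δ−2} / ( p₀ (Δ−1)^{Δ−1} (1−p₀)^{Δ−2} ) ). Then for every integer x ≥ 2, P(T^{(2)} = x) ≤ (2/x)·((1−p₀)/(p₀(Δ−2)))²·e^{−ξ_* x}. -/

import Mathlib

open MeasureTheory ProbabilityTheory

/-- Upper half of the cycle lemma: at most `2` rotations of a cyclic step sequence
with step increments `≥ -1` and total sum `-2` avoid the value `-2` before time `x`. -/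
lemma cycle_count_le_two (x : ℕ) (e : ℕ → ℤ)
    (he1 : ∀ i, -1 ≤ e i) (hper : ∀ i, e (i + x) = e i)
    (hsum : ∑ i ∈ Finset.range x, e i = -2)
    (s : Finset ℕ) (hs : s ⊆ Finset.range x)
    (hgood : ∀ r ∈ s, ∀ k < x, (∑ i ∈ Finset.range k, e (r + i)) ≠ -2) :
    s.card ≤ 2 := by
  set A : ℕ → ℤ := fun m => ∑ i ∈ Finset.range m, e i with hAdef
  have hsucc : ∀ m, A (m + 1) = A m + e m := fun m => Finset.sum_range_succ e m
  have hshift : ∀ r k, (∑ i ∈ Finset.range k, e (r + i)) = A (r + k) - A r := by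
    intro r k
    induction k with
    | zero => simp [hAdef]
    | succ k ih =>
      rw [Finset.sum_range_succ, ih, show r + (k+1) = (r+k) + 1 by ring, hsucc]
      ring
  have hper' : ∀ m, A (m + x) = A m - 2 := by
    intro m
    induction m with
    | zero => simpa [hAdef] using hsum
    | succ m ih =>
      rw [show m + 1 + x = (m + x) + 1 by ring, hsucc, ih, hper, hsucc]
      ring
  have hlb : ∀ r ∈ s, ∀ k < x, -1 ≤ A (r + k) - A r := by
    intro r hr k hk
    induction k with
    | zero => simp
    | succ k ih =>
      have h1 := ih (by omega)
      have h2 := hsucc (r + k)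
      have h3 := hgood r hr (k+1) hk
      rw [hshift] at h3
      have h4 := he1 (r + k)
      rw [show r + (k+1) = (r+k) + 1 by ring] at h3 ⊢
      omega
  have key : ∀ a b c, a ∈ s → b ∈ s → c ∈ s → a < b → b < c → False := by
    intro a b c ha hb hc hab hbc
    have hcx : c < x := Finset.mem_range.mp (hs hc)
    have hbx : b < x := Finset.mem_range.mp (hs hb)
    have f1 : -1 ≤ A (a + (b - a)) - A a := hlb a ha (b-a) (by omega)
    have f2 : -1 ≤ A (a + (c - a)) - A a := hlb a ha (c-a) (by omega)
    have f3 : -1 ≤ A (b + (a + x - b)) - A b := hlb b hb (a+x-b) (by omega)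
    have f4 : -1 ≤ A (c + (b + x - c)) - A c := hlb c hc (b+x-c) (by omega)
    rw [show a + (b-a) = b by omega] at f1
    rw [show a + (c-a) = c by omega] at f2
    rw [show b + (a + x - b) = a + x by omega] at f3
    rw [show c + (b + x - c) = b + x by omega] at f4
    have g1 := hper' a
    have g2 := hper' b
    omega
  by_contra h
  have h' : 2 < s.card := by omega
  obtain ⟨a, ha, b, hb, c, hc, hab, hac, hbc⟩ := Finset.two_lt_card.mp h'
  rcases lt_trichotomy a b with h1 | h1 | h1
  · rcases lt_trichotomy b c with h2 | h2 | h2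
    · exact key a b c ha hb hc h1 h2
    · exact hbc h2
    · rcases lt_trichotomy a c with h3 | h3 | h3
      · exact key a c b ha hc hb h3 h2
      · exact hac h3
      · exact key c a b hc ha hb h3 h1
  · exact hab h1
  · rcases lt_trichotomy a c with h2 | h2 | h2
    · exact key b a c hb ha hc h1 h2
    · exact hac h2
    · rcases lt_trichotomy b c with h3 | h3 | h3
      · exact key b c a hb hc ha h3 h2
      · exact hbc h3
      · exact key c b a hc hb ha h3 h1

/-- Any event determined by finitely many independent identically distributed discrete
variables has probability bounded by the sum of the corresponding cylinder weights. -/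
lemma decomp_le {Ω : Type*} [MeasurableSpace Ω] (P : Measure Ω) [IsProbabilityMeasure P]
    (Δ : ℕ) (ξ : ℕ → Ω → ℕ)
    (hmeas : ∀ i, Measurable (ξ i))
    (hindep : iIndepFun ξ P)
    (pm : ℕ → ℝ)
    (hbin : ∀ i k, (P {ω | ξ i ω = k}).toReal = pm k)
    (hone : ∑ k ∈ Finset.range Δ, pm k = 1)
    (x : ℕ) (σ : Fin x → ℕ) (hσ : Function.Injective σ)
    (Q : (Fin x → ℕ) → Prop) [DecidablePred Q] :
    (P {ω | Q (fun i => ξ (σ i) ω)}).toReal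
      ≤ ∑ f ∈ (Fintype.piFinset fun _ : Fin x => Finset.range Δ).filter Q,
          ∏ i : Fin x, pm (f i) := by
  set C : (Fin x → ℕ) → Set Ω := fun f => ⋂ i : Fin x, {ω | ξ (σ i) ω = f i} with hC
  have hCmeas : ∀ f : Fin x → ℕ, P (C f) = ∏ i : Fin x, P {ω | ξ (σ i) ω = f i} := by
    intro f
    set sets : ℕ → Set ℕ := fun j => {n | ∀ i, σ i = j → f i = n} with hsetsdef
    have hind := (iIndepFun_iff_measure_inter_preimage_eq_mul.mp hindep)
      (Finset.image σ Finset.univ) (sets := sets) (fun i _ => trivial)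
    have hset : (⋂ j ∈ Finset.image σ Finset.univ, ξ j ⁻¹' sets j) = C f := by
      ext ω
      simp only [Set.mem_iInter, Finset.mem_image, Finset.mem_univ, true_and, hC,
        Set.mem_preimage, Set.mem_setOf_eq, forall_exists_index]
      constructor
      · intro h i
        exact (h (σ i) i rfl i rfl).symm
      · rintro h j i rfl i' hi'
        have : i' = i := hσ hi'
        subst this
        exact (h i').symm
    have hsets : ∀ i : Fin x, sets (σ i) = {f i} := by
      intro i
      ext n
      simp only [hsetsdef, Set.mem_setOf_eq, Set.mem_singleton_iff]
      constructor
      · intro h; exact (h i rfl).symm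
      · intro h i' hi'; rw [hσ hi', h]
    rw [hset] at hind
    rw [hind, Finset.prod_image (fun i _ j _ h => hσ h)]
    apply Finset.prod_congr rfl
    intro i _
    rw [hsets i]
    rfl
  have hnull : ∀ j : ℕ, P {ω | Δ ≤ ξ j ω} = 0 := by
    intro j
    have hAmeas : MeasurableSet {ω | ξ j ω < Δ} := by
      have : {ω | ξ j ω < Δ} = ξ j ⁻¹' {n | n < Δ} := rfl
      rw [this]; exact (hmeas j) trivial
    have hA : P {ω | ξ j ω < Δ} = 1 := by
      have hdecomp : {ω | ξ j ω < Δ} = ⋃ k ∈ Finset.range Δ, {ω | ξ j ω = k} := by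
        ext ω; simp only [Set.mem_setOf_eq, Set.mem_iUnion, Finset.mem_range]
        exact ⟨fun h => ⟨_, h, rfl⟩, fun ⟨k, hk, he⟩ => by rw [he]; exact hk⟩
      have hdisj : Set.PairwiseDisjoint ↑(Finset.range Δ) (fun k => {ω | ξ j ω = k}) := by
        intro a _ b _ hab
        refine Set.disjoint_left.mpr ?_
        intro ω ha hb
        exact hab (ha ▸ hb ▸ rfl)
      have hm : ∀ k ∈ Finset.range Δ, MeasurableSet {ω | ξ j ω = k} := by
        intro k _
        have : {ω | ξ j ω = k} = ξ j ⁻¹' {k} := rfl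
        rw [this]; exact (hmeas j) trivial
      have := measure_biUnion_finset (μ := P) hdisj hm
      rw [hdecomp, this]
      rw [← ENNReal.toReal_eq_one_iff]
      rw [ENNReal.toReal_sum (fun k _ => measure_ne_top P _)]
      simp_rw [hbin j]
      exact hone
    have hcompl : {ω | Δ ≤ ξ j ω} = {ω | ξ j ω < Δ}ᶜ := by
      ext ω; simp [not_lt]
    rw [hcompl, measure_compl hAmeas (measure_ne_top P _), hA, measure_univ, tsub_self]
  set F := (Fintype.piFinset fun _ : Fin x => Finset.range Δ).filter Q with hF
  set N : Set Ω := ⋃ i : Fin x, {ω | Δ ≤ ξ (σ i) ω} with hN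
  have hcover : {ω | Q (fun i => ξ (σ i) ω)} ⊆ (⋃ f ∈ F, C f) ∪ N := by
    intro ω hω
    by_cases hb : ∀ i : Fin x, ξ (σ i) ω < Δ
    · left
      have hmem : (fun i => ξ (σ i) ω) ∈ F := by
        rw [hF, Finset.mem_filter]
        refine ⟨?_, hω⟩
        rw [Fintype.mem_piFinset]
        intro i; exact Finset.mem_range.mpr (hb i)
      have hmem2 : ω ∈ C (fun i => ξ (σ i) ω) := by
        rw [hC]; exact Set.mem_iInter.mpr fun i => rfl
      exact Set.mem_biUnion hmem hmem2
    · right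
      push_neg at hb
      obtain ⟨i, hi⟩ := hb
      exact Set.mem_iUnion.mpr ⟨i, hi⟩
  have hPN : P N = 0 := by
    rw [hN]
    exact measure_iUnion_null fun i => hnull (σ i)
  have hchain : P {ω | Q (fun i => ξ (σ i) ω)} ≤ ∑ f ∈ F, P (C f) := by
    calc P {ω | Q (fun i => ξ (σ i) ω)} ≤ P ((⋃ f ∈ F, C f) ∪ N) := measure_mono hcover
    _ ≤ P (⋃ f ∈ F, C f) + P N := measure_union_le _ _
    _ = P (⋃ f ∈ F, C f) := by rw [hPN, add_zero]
    _ ≤ ∑ f ∈ F, P (C f) := measure_biUnion_finset_le _ _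
  have hsum_ne : (∑ f ∈ F, P (C f)) ≠ ⊤ :=
    (ENNReal.sum_lt_top.mpr fun f _ => (measure_lt_top P _)).ne
  calc (P {ω | Q (fun i => ξ (σ i) ω)}).toReal ≤ (∑ f ∈ F, P (C f)).toReal :=
        ENNReal.toReal_mono hsum_ne hchain
  _ = ∑ f ∈ F, (P (C f)).toReal := ENNReal.toReal_sum (fun f _ => measure_ne_top P _)
  _ = ∑ f ∈ F, ∏ i : Fin x, pm (f i) := by
      apply Finset.sum_congr rfl
      intro f _
      rw [hCmeas f, ENNReal.toReal_prod]
      exact Finset.prod_congr rfl fun i _ => hbin (σ i) (f i)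

lemma binom_aux (p q u : ℝ) (n m : ℕ) (hm : m = n + 1) :
    ∑ k ∈ Finset.range m, (Nat.choose n k : ℝ) * p ^ k * q ^ (n - k) * u ^ k
      = (p * u + q) ^ n := by
  subst hm
  rw [add_pow]
  apply Finset.sum_congr rfl
  intro k _
  rw [mul_pow]
  ring

lemma binom_one (p : ℝ) (n m : ℕ) (hm : m = n + 1) :
    ∑ k ∈ Finset.range m, (Nat.choose n k : ℝ) * p ^ k * (1 - p) ^ (n - k) = 1 := by
  have h := binom_aux p (1 - p) 1 n m hm
  simp only [one_pow, mul_one] at h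
  rw [h]
  norm_num

lemma alg_lemma (p q δ : ℝ) (hp : p ≠ 0) (hq : q ≠ 0) (hδ : δ ≠ 0) (d' y : ℕ)
    (u B : ℝ) (hu : u = q / (p * δ)) (hB : B = p * (δ+1)^(d'+2) * q^(d'+1) / δ^(d'+1)) :
    ((p * u + q)^(d'+2))^(y+2) / u^y = u^2 * B^(y+2) := by
  have hu0 : u ≠ 0 := by rw [hu]; exact div_ne_zero hq (mul_ne_zero hp hδ)
  have hM : (p * u + q) ^ (d'+2) = u * B := by
    have h1 : p * u + q = q * (δ+1) / δ := by rw [hu]; field_simp; ring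
    rw [h1, hu, hB, div_pow, mul_pow]
    rw [show d'+2 = (d'+1)+1 from rfl, pow_succ q (d'+1), pow_succ δ (d'+1)]
    field_simp
  rw [hM, mul_pow, pow_add]
  field_simp

/-- The total progeny of a Galton–Watson forest with two initial particles and offspring
variables `ξ 0, ξ 1, …`, realized as the first time `k` at which the random walk with
steps `ξ i − 1` reaches `−2`, i.e. `Σ_{i<k} ξ i = k − 2`. -/
noncomputable def totalProgenyTwo {Ω : Type*} (ξ : ℕ → Ω → ℕ) (ω : Ω) : ℕ :=
  sInf {k : ℕ | (∑ i ∈ Finset.range k, (ξ i ω : ℤ)) = (k : ℤ) - 2}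

/-- **Chernoff bound on the total-progeny point probabilities.**
With `ξ_* = log((Δ−2)^{Δ−2}/(p₀(Δ−1)^{Δ−1}(1−p₀)^{Δ−2}))`, for every `x ≥ 2`,
`P(T^{(2)} = x) ≤ (2/x)·((1−p₀)/(p₀(Δ−2)))²·e^{−ξ_* x}`. -/
theorem totalProgeny_point_tail {Ω : Type*} [MeasurableSpace Ω] (P : Measure Ω)
    [IsProbabilityMeasure P]
    (Δ : ℕ) (hΔ : 3 ≤ Δ) (p₀ : ℝ) (hp : p₀ ∈ Set.Ioo (0:ℝ) 1)
    (hsub : p₀ * ((Δ : ℝ) - 1) < 1)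
    (ξ : ℕ → Ω → ℕ) (hmeas : ∀ i, Measurable (ξ i))
    (hindep : iIndepFun ξ P)
    (hbin : ∀ i k, (P {ω | ξ i ω = k}).toReal
      = (Nat.choose (Δ - 1) k : ℝ) * p₀ ^ k * (1 - p₀) ^ (Δ - 1 - k))
    (ξstar : ℝ)
    (hξstar : ξstar = Real.log (((Δ : ℝ) - 2) ^ (Δ - 2)
      / (p₀ * ((Δ : ℝ) - 1) ^ (Δ - 1) * (1 - p₀) ^ (Δ - 2))))
    (x : ℕ) (hx : 2 ≤ x) :
    (P {ω | totalProgenyTwo ξ ω = x}).toReal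
      ≤ (2 / x) * ((1 - p₀) / (p₀ * ((Δ : ℝ) - 2))) ^ 2 * Real.exp (-ξstar * x) := by
  obtain ⟨hp0, hp1⟩ := hp
  have hq0 : (0:ℝ) < 1 - p₀ := by linarith
  have x0 : 0 < x := by omega
  haveI : NeZero x := ⟨by omega⟩
  have hΔ3 : (3:ℝ) ≤ (Δ:ℝ) := by exact_mod_cast hΔ
  have hδpos : (0:ℝ) < (Δ:ℝ) - 2 := by linarith
  set pm : ℕ → ℝ := fun k => (Nat.choose (Δ - 1) k : ℝ) * p₀ ^ k * (1 - p₀) ^ (Δ - 1 - k)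
    with hpmdef
  have hpm0 : ∀ k, 0 ≤ pm k := fun k =>
    mul_nonneg (mul_nonneg (Nat.cast_nonneg _) (pow_nonneg hp0.le _))
      (pow_nonneg hq0.le _)
  have hone : ∑ k ∈ Finset.range Δ, pm k = 1 := binom_one p₀ (Δ-1) Δ (by omega)
  set u : ℝ := (1 - p₀) / (p₀ * ((Δ:ℝ) - 2)) with hudef
  have hu0 : 0 < u := div_pos hq0 (mul_pos hp0 hδpos)
  set Q0 : (Fin x → ℕ) → Prop := fun f =>
    (∀ k < x, (∑ i ∈ Finset.range k, ((f ⟨i % x, Nat.mod_lt i x0⟩ : ℤ) - 1)) ≠ -2) ∧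
    (∑ i ∈ Finset.range x, ((f ⟨i % x, Nat.mod_lt i x0⟩ : ℤ) - 1)) = -2 with hQ0def
  set Qs : (Fin x → ℕ) → Prop := fun f => (∑ i : Fin x, f i) = x - 2 with hQsdef
  set F := (Fintype.piFinset fun _ : Fin x => Finset.range Δ) with hFdef
  set w : (Fin x → ℕ) → ℝ := fun f => ∏ i : Fin x, pm (f i) with hwdef
  have hw0 : ∀ f, 0 ≤ w f := fun f => Finset.prod_nonneg fun i _ => hpm0 _
  -- bridge between cyclic range-sums and `Fin` sums
  have hbridge : ∀ g : Fin x → ℕ,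
      (∑ i ∈ Finset.range x, ((g ⟨i % x, Nat.mod_lt i x0⟩ : ℤ) - 1))
        = (∑ i : Fin x, (g i : ℤ)) - (x:ℤ) := by
    intro g
    have h1 : ∑ i : Fin x, ((g i : ℤ) - 1)
        = ∑ i ∈ Finset.range x, ((g ⟨i % x, Nat.mod_lt i x0⟩ : ℤ) - 1) := by
      rw [← Fin.sum_univ_eq_sum_range (fun m => ((g ⟨m % x, Nat.mod_lt m x0⟩ : ℤ) - 1)) x]
      apply Finset.sum_congr rfl
      intro i _
      have h2 : (⟨(i:ℕ) % x, Nat.mod_lt _ x0⟩ : Fin x) = i := by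
        apply Fin.ext; simp [Nat.mod_eq_of_lt i.isLt]
      rw [h2]
    rw [← h1, Finset.sum_sub_distrib, Finset.sum_const, Finset.card_univ, Fintype.card_fin,
      nsmul_eq_mul, mul_one]
  -- Step A: the total progeny event is contained in the `Q0` cylinder event
  have hconv : ∀ (ω : Ω) k, k ≤ x →
      (∑ i ∈ Finset.range k, ((ξ (i % x) ω : ℤ) - 1))
        = (∑ i ∈ Finset.range k, (ξ i ω : ℤ)) - k := by
    intro ω k hk
    rw [Finset.sum_sub_distrib, Finset.sum_const, Finset.card_range, nsmul_eq_mul, mul_one]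
    congr 1
    apply Finset.sum_congr rfl
    intro i hi
    rw [Nat.mod_eq_of_lt (lt_of_lt_of_le (Finset.mem_range.mp hi) hk)]
  have hsubsetA : {ω | totalProgenyTwo ξ ω = x} ⊆ {ω | Q0 (fun i => ξ (Fin.val i) ω)} := by
    intro ω hω
    simp only [Set.mem_setOf_eq] at hω ⊢
    unfold totalProgenyTwo at hω
    have hne : {k : ℕ | (∑ i ∈ Finset.range k, (ξ i ω : ℤ)) = (k : ℤ) - 2}.Nonempty := by
      by_contra hne
      rw [Set.not_nonempty_iff_eq_empty] at hne
      rw [hne, Nat.sInf_empty] at hω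
      omega
    have hxS : (∑ i ∈ Finset.range x, (ξ i ω : ℤ)) = (x:ℤ) - 2 := by
      have hm := Nat.sInf_mem hne
      rw [hω] at hm
      exact hm
    have hnot : ∀ k, k < x → (∑ i ∈ Finset.range k, (ξ i ω : ℤ)) ≠ (k:ℤ) - 2 := by
      intro k hk hcon
      exact Nat.notMem_of_lt_sInf (by rw [hω]; exact hk) hcon
    rw [hQ0def]
    refine ⟨?_, ?_⟩
    · intro k hk hcon
      apply hnot k hk
      have hc2 : (∑ i ∈ Finset.range k, ((ξ (i % x) ω : ℤ) - 1)) = -2 := hcon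
      rw [hconv ω k hk.le] at hc2
      linarith
    · show (∑ i ∈ Finset.range x, ((ξ (i % x) ω : ℤ) - 1)) = -2
      rw [hconv ω x le_rfl, hxS]
      ring
  -- Step B: decomposition bound
  have hstepB : (P {ω | Q0 (fun i => ξ (Fin.val i) ω)}).toReal ≤ ∑ f ∈ F.filter Q0, w f := by
    have := decomp_le P Δ ξ hmeas hindep pm hbin hone x Fin.val Fin.val_injective Q0
    simpa [hFdef, hwdef, Finset.filter_congr_decidable] using this
  -- Step C: rotation invariance and the cycle lemma
  have hrot : ∀ c : Fin x, ∑ f ∈ F.filter Q0, w f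
      = ∑ f ∈ F.filter (fun f => Q0 (fun i => f (i + c))), w f := by
    intro c
    refine Finset.sum_bij' (i := fun f _ => (fun j : Fin x => f (j - c)))
      (j := fun f _ => (fun j : Fin x => f (j + c))) ?_ ?_ ?_ ?_ ?_
    · intro f hf
      obtain ⟨hfF, hfQ⟩ := Finset.mem_filter.mp hf
      rw [Finset.mem_filter]
      refine ⟨Fintype.mem_piFinset.mpr fun j => Fintype.mem_piFinset.mp hfF _, ?_⟩
      have he : (fun i : Fin x => f (i + c - c)) = f := by
        funext i; rw [add_sub_cancel_right]
      show Q0 (fun i : Fin x => f (i + c - c))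
      rw [he]; exact hfQ
    · intro f hf
      obtain ⟨hfF, hfQ⟩ := Finset.mem_filter.mp hf
      rw [Finset.mem_filter]
      exact ⟨Fintype.mem_piFinset.mpr fun j => Fintype.mem_piFinset.mp hfF _, hfQ⟩
    · intro f _
      funext j
      show f (j + c - c) = f j
      rw [add_sub_cancel_right]
    · intro f _
      funext j
      show f (j - c + c) = f j
      rw [sub_add_cancel]
    · intro f _
      simp only [hwdef]
      exact (Equiv.prod_comp (Equiv.subRight c) (fun j => pm (f j))).symm
  have hmainC : (x:ℝ) * (∑ f ∈ F.filter Q0, w f) ≤ 2 * ∑ f ∈ F.filter Qs, w f := by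
    have h3 : ∀ f ∈ F, (∑ r ∈ Finset.range x,
        if Q0 (fun i => f (i + (⟨r % x, Nat.mod_lt r x0⟩ : Fin x))) then w f else 0)
        ≤ 2 * (if Qs f then w f else 0) := by
      intro f hf
      set e : ℕ → ℤ := fun m => ((f ⟨m % x, Nat.mod_lt m x0⟩ : ℤ) - 1) with hedef
      have hrot_sum : ∀ (r : ℕ) (k : ℕ),
          (∑ i ∈ Finset.range k,
            (((f (⟨i % x, Nat.mod_lt i x0⟩ + (⟨r % x, Nat.mod_lt r x0⟩ : Fin x)) : ℕ) : ℤ) - 1))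
            = ∑ i ∈ Finset.range k, e (r + i) := by
        intro r k
        apply Finset.sum_congr rfl
        intro i _
        simp only [hedef]
        have harg : (⟨i % x, Nat.mod_lt i x0⟩ + (⟨r % x, Nat.mod_lt r x0⟩ : Fin x))
            = (⟨(r + i) % x, Nat.mod_lt (r + i) x0⟩ : Fin x) := by
          apply Fin.ext
          simp only [Fin.val_add]
          conv_rhs => rw [Nat.add_mod]
          rw [Nat.add_comm (i % x) (r % x)]
        rw [harg]
      by_cases hQs : Qs f
      · rw [if_pos hQs]
        have hsum_e : ∑ i ∈ Finset.range x, e i = -2 := by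
          simp only [hedef]
          rw [hbridge f]
          have hc : (∑ i : Fin x, ((f i : ℕ) : ℤ)) = (x:ℤ) - 2 := by
            rw [← Nat.cast_sum]
            have hQs' : (∑ i : Fin x, f i) = x - 2 := hQs
            rw [hQs']
            push_cast
            omega
          rw [hc]; ring
        have hcard : ((Finset.range x).filter (fun r =>
            Q0 (fun i => f (i + (⟨r % x, Nat.mod_lt r x0⟩ : Fin x))))).card ≤ 2 := by
          apply cycle_count_le_two x e ?_ ?_ hsum_e _ (Finset.filter_subset _ _)
          · intro r hr k hk
            have hQr := (Finset.mem_filter.mp hr).2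
            have h1 := hQr.1 k hk
            intro hcon
            exact h1 ((hrot_sum r k).trans hcon)
          · intro m
            simp only [hedef]
            have : (0:ℤ) ≤ ((f ⟨m % x, Nat.mod_lt m x0⟩ : ℕ) : ℤ) := Int.natCast_nonneg _
            omega
          · intro m
            simp only [hedef]
            have harg : (⟨(m + x) % x, Nat.mod_lt (m + x) x0⟩ : Fin x)
                = ⟨m % x, Nat.mod_lt m x0⟩ := Fin.ext (by simp [Nat.add_mod_right])
            rw [harg]
        rw [← Finset.sum_filter, Finset.sum_const, nsmul_eq_mul]
        have h4 : (((Finset.range x).filter (fun r =>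
            Q0 (fun i => f (i + (⟨r % x, Nat.mod_lt r x0⟩ : Fin x))))).card : ℝ) ≤ 2 := by
          exact_mod_cast hcard
        exact mul_le_mul_of_nonneg_right h4 (hw0 f)
      · rw [if_neg hQs, mul_zero]
        apply le_of_eq
        apply Finset.sum_eq_zero
        intro r _
        rw [if_neg]
        intro hQr
        apply hQs
        have h2' := hQr.2
        rw [hbridge (fun i => f (i + (⟨r % x, Nat.mod_lt r x0⟩ : Fin x)))] at h2'
        have h6 : (∑ i : Fin x, ((f (i + (⟨r % x, Nat.mod_lt r x0⟩ : Fin x)) : ℕ) : ℤ))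
            = ∑ i : Fin x, ((f i : ℕ) : ℤ) :=
          Equiv.sum_comp (Equiv.addRight (⟨r % x, Nat.mod_lt r x0⟩ : Fin x))
            (fun i => ((f i : ℕ) : ℤ))
        rw [h6] at h2'
        show (∑ i : Fin x, f i) = x - 2
        have h7 : ((∑ i : Fin x, f i : ℕ) : ℤ) = (x:ℤ) - 2 := by
          rw [Nat.cast_sum]; linarith
        omega
    calc (x:ℝ) * (∑ f ∈ F.filter Q0, w f)
        = ∑ _r ∈ Finset.range x, (∑ f ∈ F.filter Q0, w f) := by
          rw [Finset.sum_const, Finset.card_range, nsmul_eq_mul]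
      _ = ∑ r ∈ Finset.range x, ∑ f ∈ F.filter (fun f =>
            Q0 (fun i => f (i + (⟨r % x, Nat.mod_lt r x0⟩ : Fin x)))), w f :=
          Finset.sum_congr rfl (fun r _ => hrot _)
      _ = ∑ r ∈ Finset.range x, ∑ f ∈ F, (if Q0 (fun i =>
            f (i + (⟨r % x, Nat.mod_lt r x0⟩ : Fin x))) then w f else 0) :=
          Finset.sum_congr rfl (fun r _ => Finset.sum_filter _ _)
      _ = ∑ f ∈ F, ∑ r ∈ Finset.range x, (if Q0 (fun i =>
            f (i + (⟨r % x, Nat.mod_lt r x0⟩ : Fin x))) then w f else 0) := Finset.sum_comm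
      _ ≤ ∑ f ∈ F, 2 * (if Qs f then w f else 0) := Finset.sum_le_sum h3
      _ = 2 * ∑ f ∈ F.filter Qs, w f := by rw [← Finset.mul_sum, Finset.sum_filter]
  -- Step D: Chernoff bound on the sum over `Qs`
  have hstepD : ∑ f ∈ F.filter Qs, w f
      ≤ ((p₀ * u + (1 - p₀)) ^ (Δ - 1)) ^ x / u ^ (x - 2) := by
    have hwD : ∀ f ∈ F.filter Qs,
        w f = (∏ i : Fin x, (pm (f i) * u ^ (f i))) / u ^ (x - 2) := by
      intro f hf
      have hQs : (∑ i : Fin x, f i) = x - 2 := (Finset.mem_filter.mp hf).2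
      rw [Finset.prod_mul_distrib, Finset.prod_pow_eq_pow_sum, hQs]
      rw [mul_div_assoc, div_self (pow_ne_zero _ (ne_of_gt hu0)), mul_one]
    rw [Finset.sum_congr rfl hwD]
    have hterm : ∀ f ∈ F, 0 ≤ (∏ i : Fin x, (pm (f i) * u ^ (f i))) / u ^ (x - 2) := fun f _ =>
      div_nonneg (Finset.prod_nonneg fun i _ => mul_nonneg (hpm0 _) (pow_nonneg hu0.le _))
        (pow_nonneg hu0.le _)
    calc ∑ f ∈ F.filter Qs, (∏ i : Fin x, (pm (f i) * u ^ (f i))) / u ^ (x - 2)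
        ≤ ∑ f ∈ F, (∏ i : Fin x, (pm (f i) * u ^ (f i))) / u ^ (x - 2) :=
          Finset.sum_le_sum_of_subset_of_nonneg (Finset.filter_subset _ _)
            (fun f hf _ => hterm f hf)
      _ = (∑ f ∈ F, ∏ i : Fin x, (pm (f i) * u ^ (f i))) / u ^ (x - 2) := by
          rw [Finset.sum_div]
      _ = (∏ _i : Fin x, ∑ k ∈ Finset.range Δ, (pm k * u ^ k)) / u ^ (x - 2) := by
          rw [Finset.prod_univ_sum]
      _ = ((p₀ * u + (1 - p₀)) ^ (Δ - 1)) ^ x / u ^ (x - 2) := by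
          have hin : ∑ k ∈ Finset.range Δ, (pm k * u ^ k) = (p₀ * u + (1 - p₀)) ^ (Δ - 1) := by
            simp only [hpmdef]
            exact binom_aux p₀ (1 - p₀) u (Δ - 1) Δ (by omega)
          rw [hin, Finset.prod_const, Finset.card_univ, Fintype.card_fin]
  -- Step E: identification of the Chernoff quantity with the stated bound
  set B : ℝ := p₀ * ((Δ:ℝ) - 1) ^ (Δ - 1) * (1 - p₀) ^ (Δ - 2) / ((Δ:ℝ) - 2) ^ (Δ - 2)
    with hBdef
  have hΔ1pos : (0:ℝ) < (Δ:ℝ) - 1 := by linarith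
  have hBpos : 0 < B := by
    apply div_pos
    · exact mul_pos (mul_pos hp0 (pow_pos hΔ1pos _)) (pow_pos hq0 _)
    · exact pow_pos hδpos _
  have hexp : Real.exp (-ξstar * x) = B ^ x := by
    have hlog : -ξstar = Real.log B := by
      rw [hξstar, ← Real.log_inv]
      congr 1
      rw [inv_div]
    rw [show -ξstar * (x:ℝ) = (x:ℝ) * Real.log B by rw [hlog]; ring]
    rw [Real.exp_nat_mul, Real.exp_log hBpos]
  have halg : ((p₀ * u + (1 - p₀)) ^ (Δ - 1)) ^ x / u ^ (x - 2) = u ^ 2 * B ^ x := by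
    obtain ⟨d', hd'⟩ : ∃ d', Δ = d' + 3 := ⟨Δ - 3, by omega⟩
    obtain ⟨y, hy⟩ : ∃ y, x = y + 2 := ⟨x - 2, by omega⟩
    rw [hBdef, show Δ - 1 = d' + 2 by omega, show Δ - 2 = d' + 1 by omega,
      show x - 2 = y by omega, show ((Δ:ℝ) - 1) = ((Δ:ℝ) - 2) + 1 by ring, hy]
    exact alg_lemma p₀ (1 - p₀) ((Δ:ℝ) - 2) (ne_of_gt hp0) (ne_of_gt hq0)
      (ne_of_gt hδpos) d' y u _ hudef rfl
  -- assemble everything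
  have hxpos : (0:ℝ) < x := by exact_mod_cast x0
  have hfinal : ∑ f ∈ F.filter Q0, w f ≤ 2 / x * (u ^ 2 * B ^ x) := by
    have h6 : ∑ f ∈ F.filter Qs, w f ≤ u ^ 2 * B ^ x := by rw [← halg]; exact hstepD
    rw [div_mul_eq_mul_div, le_div_iff₀ hxpos, mul_comm]
    linarith [hmainC, h6]
  calc (P {ω | totalProgenyTwo ξ ω = x}).toReal
      ≤ (P {ω | Q0 (fun i => ξ (Fin.val i) ω)}).toReal :=
        ENNReal.toReal_mono (measure_ne_top P _) (measure_mono hsubsetA)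
    _ ≤ ∑ f ∈ F.filter Q0, w f := hstepB
    _ ≤ 2 / x * (u ^ 2 * B ^ x) := hfinal
    _ = 2 / (x:ℝ) * u ^ 2 * Real.exp (-ξstar * x) := by rw [hexp]; ring
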